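/- Let f : ℤ → {0,1} be a weight diagram with n black balls, with solid-arrow targets ⟵i▲ defined as above. If i₁ < i₂ are black-ball positions, j₁ ∈ ⟵i₁▲ and j₂ ∈ ⟵i₂▲, then either j₂ < j₁ or j₂ > i₁. In particular, ⟵i₁▲ ∩ ⟵i₂▲ = ∅ (two solid arrows can only intersect at a common source). -/

import Mathlib

/-- The ±1 marker of a weight diagram `f : ℤ → {0,1}`: `g(i) = (-1)^(f(i)+1)`,
i.e. `1` on black balls and `-1` on empty positions. -/
def bg (f : ℤ → ℤ) (i : ℤ) : ℤ := if f i = 1 then 1 else -1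

/-- `r⁺(i,j) = Σ_{s=j}^{i-1} g(s)`. -/
noncomputable def rpl (f : ℤ → ℤ) (i j : ℤ) : ℤ := ∑ s ∈ Finset.Icc j (i - 1), bg f s

/-- `r⁻(i,j) = -Σ_{s=j+1}^{i} g(s)`. -/
noncomputable def rmi (f : ℤ → ℤ) (i j : ℤ) : ℤ := -∑ s ∈ Finset.Icc (j + 1) i, bg f s

/-- The set `⟵i▲(f)` of targets of solid arrows starting at position `i`:
`{j < i : r⁺(i,j) = 0 and r⁺(i,s) ≥ 0 for all j < s < i}`. -/
def solidT (f : ℤ → ℤ) (i : ℤ) : Set ℤ :=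
  {j | j < i ∧ rpl f i j = 0 ∧ ∀ s, j < s → s < i → 0 ≤ rpl f i s}

/-- The set `j⇢▼(f)` of targets of dashed arrows starting at position `j`:
`{i > j : r⁻(i,j) = 0 and r⁻(s,j) ≥ 0 for all j < s < i}`. -/
def dashT (f : ℤ → ℤ) (j : ℤ) : Set ℤ :=
  {i | j < i ∧ rmi f i j = 0 ∧ ∀ s, j < s → s < i → 0 ≤ rmi f s j}

/-- `f : ℤ → ℤ` is a weight diagram with `n` black balls: it takes values in `{0,1}`
and has exactly `n` positions with value `1`. -/
def IsWD (f : ℤ → ℤ) (n : ℕ) : Prop :=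
  (∀ i, f i = 0 ∨ f i = 1) ∧ {i | f i = 1}.Finite ∧ {i | f i = 1}.ncard = n


lemma rpl_add (f : ℤ → ℤ) {i₁ i₂ j : ℤ} (h1 : j ≤ i₁) (h2 : i₁ ≤ i₂) :
    rpl f i₂ j = rpl f i₁ j + rpl f i₂ i₁ := by
  unfold rpl
  have e1 : Finset.Icc j (i₂ - 1) = Finset.Ico j i₂ := by ext x; simp
  have e2 : Finset.Icc j (i₁ - 1) = Finset.Ico j i₁ := by ext x; simp
  have e3 : Finset.Icc i₁ (i₂ - 1) = Finset.Ico i₁ i₂ := by ext x; simp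
  rw [e1, e2, e3, ← Finset.sum_union (Finset.Ico_disjoint_Ico_consecutive j i₁ i₂), Finset.Ico_union_Ico_eq_Ico h1 h2]

lemma rpl_succ (f : ℤ → ℤ) {i j : ℤ} (h : j < i) :
    rpl f i j = bg f j + rpl f i (j + 1) := by
  have := rpl_add f (i₁ := j + 1) (i₂ := i) (j := j) (by omega) (by omega)
  rw [this]
  congr 1
  unfold rpl
  rw [show j + 1 - 1 = j from by omega, Finset.Icc_self, Finset.sum_singleton]

lemma key_lemma (f : ℤ → ℤ) {i₁ i₂ : ℤ} (hi₁ : f i₁ = 1) (h12 : i₁ < i₂)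
    (h0 : rpl f i₂ i₁ = 0) (hnn : ∀ s, i₁ < s → s < i₂ → 0 ≤ rpl f i₂ s) : False := by
  have hbg : bg f i₁ = 1 := by simp [bg, hi₁]
  have hs := rpl_succ f h12
  rcases eq_or_lt_of_le (show i₁ + 1 ≤ i₂ by omega) with h | h
  · have : rpl f i₂ (i₁ + 1) = 0 := by
      unfold rpl
      rw [← h, show i₁ + 1 - 1 = i₁ from by omega, Finset.Icc_eq_empty (by omega),
        Finset.sum_empty]
    omega
  · have := hnn (i₁ + 1) (by omega) h
    omega

theorem main_key (f : ℤ → ℤ) {i₁ i₂ j₁ j₂ : ℤ}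
    (hi₁ : f i₁ = 1) (h12 : i₁ < i₂)
    (hj₁ : j₁ ∈ solidT f i₁) (hj₂ : j₂ ∈ solidT f i₂) : j₂ < j₁ ∨ i₁ < j₂ := by
  by_contra h
  push_neg at h
  obtain ⟨h1, h2⟩ := h
  obtain ⟨hlt₁, hz₁, hnn₁⟩ := hj₁
  obtain ⟨hlt₂, hz₂, hnn₂⟩ := hj₂
  rcases eq_or_lt_of_le h2 with he | he
  · exact key_lemma f hi₁ h12 (he ▸ hz₂) (fun s hs hs' => hnn₂ s (by omega) hs')
  · have hge : 0 ≤ rpl f i₁ j₂ := by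
      rcases eq_or_lt_of_le h1 with he2 | he2
      · rw [← he2, hz₁]
      · exact hnn₁ j₂ he2 he
    have hadd := rpl_add f (le_of_lt he) (le_of_lt h12)
    have hge2 : 0 ≤ rpl f i₂ i₁ := hnn₂ i₁ he h12
    have h0 : rpl f i₂ i₁ = 0 := by omega
    exact key_lemma f hi₁ h12 h0 (fun s hs hs' => hnn₂ s (by omega) hs')

/-- Two solid arrows in a weight diagram can only intersect at a common
source: if `i₁ < i₂` are black-ball positions, `j₁ ∈ ⟵i₁▲` and `j₂ ∈ ⟵i₂▲`, then either
`j₂ < j₁` or `j₂ > i₁`; in particular `⟵i₁▲ ∩ ⟵i₂▲ = ∅`. -/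
theorem stmt4 (n : ℕ) (f : ℤ → ℤ) (hf : IsWD f n) (i₁ i₂ j₁ j₂ : ℤ)
    (hi₁ : f i₁ = 1) (hi₂ : f i₂ = 1) (h12 : i₁ < i₂)
    (hj₁ : j₁ ∈ solidT f i₁) (hj₂ : j₂ ∈ solidT f i₂) :
    (j₂ < j₁ ∨ i₁ < j₂) ∧ solidT f i₁ ∩ solidT f i₂ = ∅ := by
  constructor
  · exact main_key f hi₁ h12 hj₁ hj₂
  · ext j
    simp only [Set.mem_inter_iff, Set.mem_empty_iff_false, iff_false, not_and]
    intro ha hb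
    have := main_key f hi₁ h12 ha hb
    have := ha.1
    omega
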